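/- For integers n ≥ 2 and 1 ≤ p ≤ r ≤ n-1, we have ∑_{k=p}^{r} k * C(n-1-k, r-k) = ((n*p - p*r + r)/(n - r + 1)) * C(n-p, r-p). -/

import Mathlib

open Finset

lemma lemA : ∀ (s m : ℕ), s ≤ m →
    ∑ j ∈ range (s+1), Nat.choose (m-j) (s-j) = Nat.choose (m+1) s := by
  intro s
  induction s with
  | zero => intro m _; simp
  | succ s ih =>
    intro m hm
    rw [Finset.sum_range_succ']
    have h1 : ∀ i ∈ range (s+1), Nat.choose (m-(i+1)) (s+1-(i+1)) = Nat.choose (m-1-i) (s-i) := by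
      intro i _; congr 1 <;> omega
    rw [Finset.sum_congr rfl h1, ih (m-1) (by omega)]
    have e : m - 1 + 1 = m := by omega
    rw [e, Nat.sub_zero, Nat.sub_zero, Nat.choose_succ_succ]

lemma lemB : ∀ (s m : ℕ), 1 ≤ s → s ≤ m →
    ∑ j ∈ range (s+1), j * Nat.choose (m-j) (s-j) = Nat.choose (m+1) (s-1) := by
  intro s
  induction s with
  | zero => omega
  | succ s ih =>
    intro m _ hm
    rw [Finset.sum_range_succ']
    have h1 : ∀ i ∈ range (s+1), (i+1) * Nat.choose (m-(i+1)) (s+1-(i+1))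
        = i * Nat.choose (m-1-i) (s-i) + Nat.choose (m-1-i) (s-i) := by
      intro i _
      have e1 : m-(i+1) = m-1-i := by omega
      have e2 : s+1-(i+1) = s-i := by omega
      rw [e1, e2]; ring
    rw [Finset.sum_congr rfl h1, Finset.sum_add_distrib, lemA s (m-1) (by omega)]
    have e : m - 1 + 1 = m := by omega
    rw [e, Nat.zero_mul, Nat.add_zero, Nat.succ_sub_one]
    rcases Nat.eq_zero_or_pos s with h | h
    · subst h; simp
    · rw [ih (m-1) h (by omega), e]
      have e2 : s = (s-1) + 1 := by omega
      rw [e2, Nat.choose_succ_succ (m) ((s-1))]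
      simp

lemma keynat (n p r : ℕ) (hp : 1 ≤ p) (hpr : p ≤ r) (hr : r ≤ n - 1) :
    ∑ k ∈ Finset.Icc p r, k * Nat.choose (n-1-k) (r-k)
      = p * Nat.choose (n-p) (r-p) + (if p = r then 0 else Nat.choose (n-p) (r-p-1)) := by
  rw [show Finset.Icc p r = Finset.Ico p (r+1) by rw [Finset.Ico_add_one_right_eq_Icc],
    Finset.sum_Ico_eq_sum_range, show r + 1 - p = (r-p)+1 by omega]
  have h1 : ∀ j ∈ range (r-p+1), (p+j) * Nat.choose (n-1-(p+j)) (r-(p+j))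
      = p * Nat.choose (n-1-p-j) (r-p-j) + j * Nat.choose (n-1-p-j) (r-p-j) := by
    intro j _
    have e1 : n-1-(p+j) = n-1-p-j := by omega
    have e2 : r-(p+j) = r-p-j := by omega
    rw [e1, e2]; ring
  rw [Finset.sum_congr rfl h1, Finset.sum_add_distrib, ← Finset.mul_sum,
    lemA (r-p) (n-1-p) (by omega)]
  have e3 : n-1-p+1 = n-p := by omega
  rw [e3]
  rcases eq_or_lt_of_le hpr with h | h
  · subst h; simp
  · rw [lemB (r-p) (n-1-p) (by omega) (by omega), e3, if_neg (by omega)]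

theorem stmt_0 (n p r : ℕ) (hn : 2 ≤ n) (hp : 1 ≤ p) (hpr : p ≤ r) (hr : r ≤ n - 1) :
    ∑ k ∈ Finset.Icc p r, (k : ℚ) * (Nat.choose (n - 1 - k) (r - k) : ℚ) =
      ((n : ℚ) * p - p * r + r) / ((n : ℚ) - r + 1) * (Nat.choose (n - p) (r - p) : ℚ) := by
  have hL : ∑ k ∈ Finset.Icc p r, (k : ℚ) * (Nat.choose (n - 1 - k) (r - k) : ℚ)
      = ((∑ k ∈ Finset.Icc p r, k * Nat.choose (n-1-k) (r-k) : ℕ) : ℚ) := by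
    push_cast; rfl
  rw [hL, keynat n p r hp hpr hr]
  have hD : ((n:ℚ) - r + 1) = ((n - r + 1 : ℕ) : ℚ) := by
    have : r ≤ n := by omega
    push_cast [this]; ring
  have hDpos : ((n - r + 1 : ℕ) : ℚ) ≠ 0 := by
    have h1 : (0:ℕ) < n - r + 1 := by omega
    exact_mod_cast Nat.pos_iff_ne_zero.mp h1
  rw [hD, div_mul_eq_mul_div, eq_div_iff hDpos]
  rcases eq_or_lt_of_le hpr with h | h
  · subst h
    simp only [if_pos rfl, Nat.sub_self, Nat.choose_zero_right]
    push_cast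
    have e : ((n - p : ℕ) : ℚ) = (n:ℚ) - p := by
      push_cast [show p ≤ n by omega]; ring
    rw [e]; ring
  · rw [if_neg (by omega)]
    have hkey : Nat.choose (n-p) (r-p) * (r-p) = Nat.choose (n-p) (r-p-1) * (n - r + 1) := by
      have e2 : r - p = (r-p-1)+1 := by omega
      rw [e2, Nat.choose_succ_right_eq]
      congr 1
      omega
    have hq : (Nat.choose (n-p) (r-p) : ℚ) * ((r:ℚ) - p)
        = (Nat.choose (n-p) (r-p-1) : ℚ) * ((n:ℚ) - r + 1) := by
      have h2 : ((Nat.choose (n-p) (r-p) * (r-p) : ℕ) : ℚ)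
          = ((Nat.choose (n-p) (r-p-1) * (n-r+1) : ℕ) : ℚ) := by exact_mod_cast hkey
      push_cast [hpr, show r ≤ n by omega] at h2
      linarith [h2]
    push_cast
    have e : ((n - r : ℕ) : ℚ) = (n:ℚ) - r := by
      push_cast [show r ≤ n by omega]; ring
    rw [e]
    linear_combination -hq
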